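/- Every maximal non-overlapping code X ⊆ Σ^n (n ≥ 3) arises from the partition construction: there exist a partition (L_1, R_1) of Σ into nonempty parts and, for 2 ≤ i ≤ n-1, partitions (L_i, R_i) of ⋃_{j=1}^{i-1} L_j R_{i-j}, such that X = ⋃_{i=1}^{n-1} L_i R_{n-i}. -/

import Mathlib

/-- Concatenation of sets of strings: `AB = {ab : a ∈ A, b ∈ B}`. -/
def catSet {α : Type*} (A B : Set (List α)) : Set (List α) :=
  {w | ∃ a ∈ A, ∃ b ∈ B, w = a ++ b}

/-- The partition system of Construction `M_{q,n}`: `(L 1, R 1)` is a partition of the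
one-letter words into two nonempty parts, and for `2 ≤ i ≤ n-1`, `(L i, R i)` is a
partition of `⋃_{j=1}^{i-1} (L j)(R (i-j))`. -/
def PartitionSystem {α : Type*} (n : ℕ) (L R : ℕ → Set (List α)) : Prop :=
  (L 1 ∪ R 1 = {w : List α | w.length = 1}) ∧ (L 1 ∩ R 1 = ∅) ∧
  (L 1).Nonempty ∧ (R 1).Nonempty ∧
  ∀ i, 2 ≤ i → i ≤ n - 1 →
    (L i ∪ R i = ⋃ j ∈ Finset.Ico 1 i, catSet (L j) (R (i - j))) ∧ (L i ∩ R i = ∅)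

def NoPS {α : Type*} (u v : List α) : Prop :=
  ∀ p : List α, p ≠ [] → p ≠ u → p <+: u → ¬ p <:+ v

def NonOverlap {α : Type*} (u v : List α) : Prop := NoPS u v ∧ NoPS v u

namespace NOCaux

variable {α : Type*}

/-! ### List helper lemmas -/

theorem prefix_left {p l m : List α} (h : p <+: l ++ m) (hle : p.length ≤ l.length) :
    p <+: l := by
  obtain ⟨t, ht⟩ := h
  have h1 : (p ++ t).take l.length = l := by rw [ht, List.take_left]
  rw [List.take_append, List.take_of_length_le hle] at h1
  exact ⟨_, h1⟩

theorem suffix_right {s l m : List α} (h : s <:+ l ++ m) (hle : s.length ≤ m.length) :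
    s <:+ m := by
  obtain ⟨t, ht⟩ := h
  have hlt : l.length ≤ t.length := by
    have := congrArg List.length ht
    simp at this; omega
  have h1 : (t ++ s).drop l.length = m := by
    rw [ht, List.drop_append, List.drop_eq_nil_of_le le_rfl,
      Nat.sub_self, List.drop_zero, List.nil_append]
  rw [List.drop_append, Nat.sub_eq_zero_of_le hlt, List.drop_zero] at h1
  exact ⟨_, h1⟩

theorem prefix_split {p l m : List α} (h : p <+: l ++ m) (hlt : l.length < p.length) :
    ∃ q, q <+: m ∧ q ≠ [] ∧ p = l ++ q := by
  obtain ⟨t, ht⟩ := h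
  have h1 : (p ++ t).take l.length = l := by rw [ht, List.take_left]
  rw [List.take_append, Nat.sub_eq_zero_of_le (le_of_lt hlt),
    List.take_zero, List.append_nil] at h1
  have h3 : p = l ++ p.drop l.length := by
    conv_lhs => rw [← List.take_append_drop l.length p]
    rw [h1]
  refine ⟨p.drop l.length, ?_, ?_, h3⟩
  · have h2 : l ++ (p.drop l.length ++ t) = l ++ m := by
      rw [← List.append_assoc, ← h3, ht]
    exact ⟨t, List.append_cancel_left h2⟩
  · have : (p.drop l.length).length = p.length - l.length := List.length_drop
    intro hnil; rw [hnil] at this; simp at this; omega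

theorem suffix_split {s l m : List α} (h : s <:+ l ++ m) (hlt : m.length < s.length) :
    ∃ q, q <:+ l ∧ q ≠ [] ∧ s = q ++ m := by
  obtain ⟨t, ht⟩ := h
  have hlen := congrArg List.length ht
  simp at hlen
  have hlt2 : t.length < l.length := by omega
  have h1 : (t ++ s).drop t.length = s := by
    rw [List.drop_append, List.drop_eq_nil_of_le le_rfl,
      Nat.sub_self, List.drop_zero, List.nil_append]
  rw [ht, List.drop_append, Nat.sub_eq_zero_of_le (le_of_lt hlt2),
    List.drop_zero] at h1
  refine ⟨l.drop t.length, ⟨l.take t.length, List.take_append_drop _ _⟩, ?_, h1.symm⟩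
  have : (l.drop t.length).length = l.length - t.length := List.length_drop
  intro hnil; rw [hnil] at this; simp at this; omega

theorem append_prefix_append {A B C : List α} (h : B <+: C) : A ++ B <+: A ++ C := by
  obtain ⟨t, ht⟩ := h
  exact ⟨t, by rw [List.append_assoc, ht]⟩

theorem drop_take_append {y : List α} {j i : ℕ} (hji : j ≤ i) (hjy : j ≤ y.length) :
    (y.take i).drop j ++ y.drop i = y.drop j := by
  conv_rhs => rw [← List.take_append_drop i y]
  rw [List.drop_append]
  congr 1
  rw [Nat.sub_eq_zero_of_le (by simp [List.length_take]; omega), List.drop_zero]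

/-! ### The sets -/

def Suf (X : Set (List α)) : Set (List α) :=
  {v | v ≠ [] ∧ ∃ x ∈ X, v <:+ x ∧ v ≠ x}

def Pre (X : Set (List α)) : Set (List α) :=
  {v | v ≠ [] ∧ ∃ x ∈ X, v <+: x ∧ v ≠ x}

inductive InD (X : Set (List α)) : List α → Prop
  | base (c : α) : InD X [c]
  | step {l r : List α} : InD X l → l ∉ Suf X → InD X r → r ∈ Suf X → InD X (l ++ r)

inductive Rcat (X : Set (List α)) : List α → Prop
  | nil : Rcat X []
  | cons {r z : List α} : InD X r → r ∈ Suf X → Rcat X z → Rcat X (r ++ z)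

def Lset (X : Set (List α)) (i : ℕ) : Set (List α) :=
  {u | InD X u ∧ u.length = i ∧ u ∉ Suf X}

def Rset (X : Set (List α)) (i : ℕ) : Set (List α) :=
  {u | InD X u ∧ u.length = i ∧ u ∈ Suf X}

variable {X : Set (List α)}

theorem suf_closed {v v' : List α} (hv : v ∈ Suf X) (h : v' <:+ v) (hne : v' ≠ []) :
    v' ∈ Suf X := by
  obtain ⟨hvne, x, hx, hsuf, hvx⟩ := hv
  refine ⟨hne, x, hx, h.trans hsuf, ?_⟩
  intro h'
  have h1 := h.length_le
  have : v.length < x.length := lt_of_le_of_ne hsuf.length_le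
    (fun hh => hvx (hsuf.eq_of_length hh))
  have h3 : v'.length = x.length := by rw [h']
  omega

theorem pre_closed {v v' : List α} (hv : v ∈ Pre X) (h : v' <+: v) (hne : v' ≠ []) :
    v' ∈ Pre X := by
  obtain ⟨hvne, x, hx, hpre, hvx⟩ := hv
  refine ⟨hne, x, hx, h.trans hpre, ?_⟩
  intro h'
  have h1 := h.length_le
  have : v.length < x.length := lt_of_le_of_ne hpre.length_le
    (fun hh => hvx (hpre.eq_of_length hh))
  have h3 : v'.length = x.length := by rw [h']
  omega

theorem pre_suf_disjoint (hcode : ∀ u ∈ X, ∀ v ∈ X, NonOverlap u v)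
    {p : List α} (hP : p ∈ Pre X) (hS : p ∈ Suf X) : False := by
  obtain ⟨hne, x, hx, hpre, hnex⟩ := hP
  obtain ⟨_, y, hy, hsuf, _⟩ := hS
  exact (hcode x hx y hy).1 p hne hnex hpre hsuf

theorem InD.ne_nil {u : List α} (h : InD X u) : u ≠ [] := by
  induction h with
  | base c => simp
  | step hl hlS hr hrS ihl ihr => simp [ihl]

theorem InD.length_pos {u : List α} (h : InD X u) : 0 < u.length :=
  List.length_pos_iff.mpr h.ne_nil

/-- J1: no nonempty proper prefix of a `D`-element lies in `S`. -/
theorem J1 {u : List α} (hu : InD X u) :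
    ∀ p, p <+: u → p ≠ [] → p ≠ u → p ∉ Suf X := by
  induction hu with
  | base c =>
    intro p hp hne hneu _
    have h1 := hp.length_le
    simp at h1
    have : p.length = 1 := by
      rcases Nat.lt_or_ge p.length 1 with h | h
      · exact absurd (List.eq_nil_of_length_eq_zero (by omega)) hne
      · omega
    exact hneu (hp.eq_of_length (by simpa using this))
  | @step l r hl hlS hr hrS ihl ihr =>
    intro p hp hne hneu hS
    rcases le_or_gt p.length l.length with h | h
    · have hpl := prefix_left hp h
      rcases eq_or_ne p l with rfl | hne2
      · exact hlS hS
      · exact ihl p hpl hne hne2 hS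
    · obtain ⟨q, hq, hqne, rfl⟩ := prefix_split hp h
      exact ihr q hq hqne (fun h' => hneu (by rw [h']))
        (suf_closed hS (List.suffix_append _ _) hqne)

/-- J2: no nonempty proper suffix of a `D`-element lies in `P`. -/
theorem J2 (hcode : ∀ u ∈ X, ∀ v ∈ X, NonOverlap u v) {u : List α} (hu : InD X u) :
    ∀ s, s <:+ u → s ≠ [] → s ≠ u → s ∉ Pre X := by
  induction hu with
  | base c =>
    intro s hs hne hneu _
    have h1 := hs.length_le
    simp at h1
    have : s.length = 1 := by
      rcases Nat.lt_or_ge s.length 1 with h | h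
      · exact absurd (List.eq_nil_of_length_eq_zero (by omega)) hne
      · omega
    exact hneu (hs.eq_of_length (by simpa using this))
  | @step l r hl hlS hr hrS ihl ihr =>
    intro s hs hne hneu hP
    rcases le_or_gt s.length r.length with h | h
    · have hsr := suffix_right hs h
      rcases eq_or_ne s r with rfl | hne2
      · exact pre_suf_disjoint hcode hP hrS
      · exact ihr s hsr hne hne2 hP
    · obtain ⟨q, hq, hqne, rfl⟩ := suffix_split hs h
      exact ihl q hq hqne (fun h' => hneu (by rw [h']))
        (pre_closed hP (List.prefix_append _ _) hqne)

/-- M: for `u ∈ D`, `u.drop t` followed by a prefix of an `R`-sequence is never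
a prefix of `u`. -/
theorem M {u : List α} (hu : InD X u) :
    ∀ t z, 1 ≤ t → t < u.length → (∃ σ, Rcat X σ ∧ z <+: σ) →
    u.drop t ++ z <+: u → False := by
  induction hu with
  | base c => intro t z h1 h2 _ _; simp at h2; omega
  | @step l r hl hlS hr hrS ihl ihr =>
    intro t z h1 h2 hZ hpre
    rcases le_or_gt l.length t with hta | hta
    · -- t ≥ |l| : drop is a suffix of r, hence in S, but it is a prefix of u : contra J1
      have hdrop : (l ++ r).drop t = r.drop (t - l.length) := by
        rw [List.drop_append, List.drop_eq_nil_of_le hta, List.nil_append]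
      have hvlen : ((l ++ r).drop t).length = (l ++ r).length - t := List.length_drop
      have h4 : t < l.length + r.length := by simpa using h2
      have hvne : (l ++ r).drop t ≠ [] := by
        intro hnil; rw [hnil] at hvlen; simp at hvlen; omega
      have hvS : (l ++ r).drop t ∈ Suf X :=
        suf_closed hrS (hdrop ▸ List.drop_suffix _ _) hvne
      have hvpre : (l ++ r).drop t <+: l ++ r :=
        (List.prefix_append ((l ++ r).drop t) z).trans hpre
      have hvneu : (l ++ r).drop t ≠ l ++ r := by
        intro hh
        have h5 := congrArg List.length hh
        simp at h5; omega
      exact J1 (InD.step hl hlS hr hrS) _ hvpre hvne hvneu hvS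
    · -- t < |l|
      have hdrop : (l ++ r).drop t = l.drop t ++ r := by
        rw [List.drop_append, Nat.sub_eq_zero_of_le (le_of_lt hta),
          List.drop_zero]
      obtain ⟨σ, hσ, hzσ⟩ := hZ
      have hpre2 : l.drop t ++ (r ++ z) <+: l ++ r := by
        rw [← List.append_assoc, ← hdrop]; exact hpre
      have hkey : l.drop t ++ (r ++ z).take t <+: l := by
        apply prefix_left ((append_prefix_append (List.take_prefix t (r ++ z))).trans hpre2)
        simp [List.length_take, List.length_drop]
        omega
      exact ihl t ((r ++ z).take t) h1 hta
        ⟨r ++ σ, Rcat.cons hr hrS hσ,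
          (List.take_prefix _ _).trans (append_prefix_append hzσ)⟩ hkey

end NOCaux

open NOCaux in
/-- Every maximal non-overlapping code arises from the partition construction. -/
theorem stmt12 {α : Type*} [Fintype α] (hq : 2 ≤ Fintype.card α) (n : ℕ) (hn : 3 ≤ n)
    (X : Set (List α)) (hlen : ∀ w ∈ X, w.length = n)
    (hcode : ∀ u ∈ X, ∀ v ∈ X, NonOverlap u v)
    (hmaximal : ∀ w : List α, w.length = n → w ∉ X →
      ∃ u ∈ insert w X, ∃ v ∈ insert w X, ¬ NonOverlap u v) :
    ∃ L R : ℕ → Set (List α), PartitionSystem n L R ∧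
      X = ⋃ i ∈ Finset.Ico 1 n, catSet (L i) (R (n - i)) := by
  classical
  have hPS : ∀ p : List α, p ∈ Pre X → p ∈ Suf X → False := fun p => pre_suf_disjoint hcode
  have pre_len : ∀ v ∈ Pre X, v.length < n := by
    rintro v ⟨hne, x, hx, hpre, hvx⟩
    have h1 := hpre.length_le
    rw [hlen x hx] at h1
    rcases lt_or_eq_of_le h1 with h | h
    · exact h
    · exact absurd (hpre.eq_of_length (by rw [hlen x hx]; exact h)) hvx
  -- X is nonempty
  have hXne : X.Nonempty := by
    by_contra hempty
    rw [Set.not_nonempty_iff_eq_empty] at hempty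
    subst hempty
    obtain ⟨a, b, hab⟩ := Fintype.exists_pair_of_one_lt_card hq
    have hwlen : (a :: List.replicate (n - 1) b).length = n := by simp; omega
    obtain ⟨u, hu, v, hv, hnov⟩ := hmaximal _ hwlen (by simp)
    have hu' : u = a :: List.replicate (n - 1) b := by
      rcases Set.mem_insert_iff.mp hu with h | h
      · exact h
      · exact absurd h (Set.notMem_empty u)
    have hv' : v = a :: List.replicate (n - 1) b := by
      rcases Set.mem_insert_iff.mp hv with h | h
      · exact h
      · exact absurd h (Set.notMem_empty v)
    subst hu'; subst hv'
    have hex : ∃ p : List α, p ≠ [] ∧ p ≠ a :: List.replicate (n - 1) b ∧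
        p <+: a :: List.replicate (n - 1) b ∧ p <:+ a :: List.replicate (n - 1) b := by
      rcases not_and_or.mp hnov with h | h <;>
      · unfold NoPS at h; push_neg at h; exact h
    obtain ⟨p, hpne, hpw, hppre, hpsuf⟩ := hex
    have hplt : p.length < n := by
      have h1 := hppre.length_le; rw [hwlen] at h1
      rcases lt_or_eq_of_le h1 with h | h
      · exact h
      · exact absurd (hppre.eq_of_length (by rw [hwlen]; exact h)) hpw
    have hprep : p <:+ List.replicate (n - 1) b := by
      have heq : (a :: List.replicate (n - 1) b) = [a] ++ List.replicate (n - 1) b := rfl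
      rw [heq] at hpsuf
      exact suffix_right hpsuf (by simp; omega)
    obtain ⟨hd, tl, rfl⟩ := List.exists_cons_of_ne_nil hpne
    have h1 : hd = a := (List.cons_prefix_cons.mp hppre).1
    have h2 : hd = b := List.eq_of_mem_replicate (hprep.subset (List.mem_cons_self))
    exact hab (h1.symm.trans h2)
  obtain ⟨x₀, hx₀⟩ := hXne
  -- Lemma B : the construction only produces codewords
  have lemB : ∀ (i : ℕ) (l r' : List α), l ∈ Lset X i → r' ∈ Rset X (n - i) →
      l ++ r' ∈ X := by
    rintro i l r' ⟨hlD, hlLen, hlS⟩ ⟨hrD, hrLen, hrS⟩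
    have hlpos : 0 < l.length := hlD.length_pos
    have hrpos : 0 < r'.length := hrD.length_pos
    have hiln : i < n := by omega
    have hwlen : (l ++ r').length = n := by simp; omega
    by_contra hw
    obtain ⟨u, hu, v, hv, hnov⟩ := hmaximal _ hwlen hw
    have Bpre : ∀ p, p <+: l ++ r' → p ≠ [] → p ≠ l ++ r' → p ∈ Suf X → False := by
      intro p hp hne hnw hS
      rcases le_or_gt p.length l.length with h | h
      · have hpl := prefix_left hp h
        rcases eq_or_ne p l with rfl | hne2
        · exact hlS hS
        · exact J1 hlD p hpl hne hne2 hS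
      · obtain ⟨q, hq, hqne, rfl⟩ := prefix_split hp h
        exact J1 hrD q hq hqne (fun h' => hnw (by rw [h']))
          (suf_closed hS (List.suffix_append _ _) hqne)
    have Bsuf : ∀ p, p <:+ l ++ r' → p ∈ Pre X → False := by
      intro p hp hP
      have hpne : p ≠ [] := hP.1
      have hplt : p.length < n := pre_len p hP
      rcases le_or_gt p.length r'.length with h | h
      · exact hPS p hP (suf_closed hrS (suffix_right hp h) hpne)
      · obtain ⟨q, hq, hqne, rfl⟩ := suffix_split hp h
        have hqP : q ∈ Pre X := pre_closed hP (List.prefix_append _ _) hqne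
        have hqnl : q ≠ l := by
          intro h'
          rw [h'] at hplt
          simp at hplt; omega
        exact J2 hcode hlD q hq hqne hqnl hqP
    have hviol : ∃ a b : List α, a ∈ insert (l ++ r') X ∧ b ∈ insert (l ++ r') X ∧
        ∃ p, p ≠ [] ∧ p ≠ a ∧ p <+: a ∧ p <:+ b := by
      rcases not_and_or.mp hnov with h | h
      · refine ⟨u, v, hu, hv, ?_⟩
        unfold NoPS at h; push_neg at h; exact h
      · refine ⟨v, u, hv, hu, ?_⟩
        unfold NoPS at h; push_neg at h; exact h
    obtain ⟨a, b, ha, hb, p, hpne, hpa, hppre, hpsuf⟩ := hviol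
    rcases Set.mem_insert_iff.mp ha with rfl | haX
    · -- a = l ++ r'
      have hplt : p.length < n := by
        have h1 := hppre.length_le; rw [hwlen] at h1
        rcases lt_or_eq_of_le h1 with h | h
        · exact h
        · exact absurd (hppre.eq_of_length (by rw [hwlen]; exact h)) hpa
      rcases Set.mem_insert_iff.mp hb with rfl | hbX
      · -- border case
        have hpdrop : p = (l ++ r').drop (n - p.length) := by
          have h1 := List.suffix_iff_eq_drop.mp hpsuf
          rw [hwlen] at h1; exact h1
        rcases le_or_gt i (n - p.length) with hti | hti
        · have hpr : p <:+ r' := suffix_right hpsuf (by omega)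
          exact Bpre p hppre hpne hpa (suf_closed hrS hpr hpne)
        · have ht1 : 1 ≤ n - p.length := by omega
          have hdrop : (l ++ r').drop (n - p.length) = l.drop (n - p.length) ++ r' := by
            have h0 : n - p.length - l.length = 0 := by omega
            rw [List.drop_append, h0, List.drop_zero]
          have hpre2 : l.drop (n - p.length) ++ r' <+: l ++ r' := by
            rw [← hdrop, ← hpdrop]; exact hppre
          have hkey : l.drop (n - p.length) ++ r'.take (n - p.length) <+: l := by
            apply prefix_left
              ((append_prefix_append (List.take_prefix (n - p.length) r')).trans hpre2)
            simp [List.length_take, List.length_drop]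
            omega
          have hRr : Rcat X r' := by
            have h1 := Rcat.cons hrD hrS Rcat.nil
            rwa [List.append_nil] at h1
          exact M hlD (n - p.length) (r'.take (n - p.length)) ht1 (by omega)
            ⟨r', hRr, List.take_prefix _ _⟩ hkey
      · have hpS : p ∈ Suf X := by
          refine ⟨hpne, b, hbX, hpsuf, ?_⟩
          intro h'; rw [h', hlen b hbX] at hplt; omega
        exact Bpre p hppre hpne hpa hpS
    · rcases Set.mem_insert_iff.mp hb with rfl | hbX
      · exact Bsuf p hpsuf ⟨hpne, a, haX, hppre, hpa⟩
      · exact (hcode a haX b hbX).1 p hpne hpa hppre hpsuf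
  -- Lemma C : every codeword is produced
  have lemC : ∀ x ∈ X, x ∈ ⋃ i ∈ Finset.Ico 1 n, catSet (Lset X i) (Rset X (n - i)) := by
    intro x hx
    have hxlen : x.length = n := hlen x hx
    have hxtake_pre : ∀ i, 1 ≤ i → i < n → x.take i ∈ Pre X := by
      intro i h1 h2
      refine ⟨?_, x, hx, List.take_prefix _ _, ?_⟩
      · intro hnil
        have h3 := congrArg List.length hnil
        simp [hxlen] at h3; omega
      · intro h'
        have h3 := congrArg List.length h'
        simp [hxlen] at h3; omega
    have psi : ∀ i, 1 ≤ i → i < n →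
        ∃ j, j < i ∧ InD X ((x.take i).drop j) ∧ (x.take i).drop j ∉ Suf X := by
      intro i
      induction i using Nat.strong_induction_on with
      | _ i ih =>
        intro h1 h2
        have inner : ∀ j, j < i → InD X ((x.take i).drop j) →
            ∃ j', j' < i ∧ InD X ((x.take i).drop j') ∧ (x.take i).drop j' ∉ Suf X := by
          intro j
          induction j using Nat.strong_induction_on with
          | _ j ihj =>
            intro hji hInD
            by_cases hS : (x.take i).drop j ∈ Suf X
            · rcases Nat.eq_zero_or_pos j with rfl | hj1
              · exfalso
                rw [List.drop_zero] at hS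
                exact hPS _ (hxtake_pre i h1 h2) hS
              · obtain ⟨j', hj'j, hInD', hS'⟩ := ih j hji hj1 (by omega)
                have htt : (x.take i).take j = x.take j := by
                  rw [List.take_take, min_eq_left (le_of_lt hji)]
                have hcomb : (x.take j).drop j' ++ (x.take i).drop j
                    = (x.take i).drop j' := by
                  rw [← htt]
                  exact drop_take_append (le_of_lt hj'j)
                    (by simp [List.length_take, hxlen]; omega)
                have hInD2 : InD X ((x.take i).drop j') := by
                  rw [← hcomb]; exact InD.step hInD' hS' hInD hS
                exact ihj j' hj'j (lt_trans hj'j hji) hInD2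
            · exact ⟨j, hji, hInD, hS⟩
        apply inner (i - 1) (by omega)
        have hlen1 : ((x.take i).drop (i - 1)).length = 1 := by
          simp [List.length_take, List.length_drop, hxlen]; omega
        obtain ⟨c, hc⟩ := List.length_eq_one_iff.mp hlen1
        rw [hc]; exact InD.base c
    have theta : ∀ i, 1 ≤ i → i < n → InD X (x.drop i) →
        x ∈ ⋃ i ∈ Finset.Ico 1 n, catSet (Lset X i) (Rset X (n - i)) := by
      intro i
      induction i using Nat.strong_induction_on with
      | _ i ih =>
        intro h1 h2 hInD
        have hdropS : x.drop i ∈ Suf X := by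
          refine ⟨?_, x, hx, List.drop_suffix _ _, ?_⟩
          · intro hnil
            have h3 := congrArg List.length hnil; simp [hxlen] at h3; omega
          · intro h'
            have h3 := congrArg List.length h'; simp [hxlen] at h3; omega
        obtain ⟨j, hji, hInDf, hfS⟩ := psi i h1 h2
        rcases Nat.eq_zero_or_pos j with rfl | hj1
        · rw [List.drop_zero] at hInDf hfS
          simp only [Set.mem_iUnion]
          refine ⟨i, Finset.mem_Ico.mpr ⟨h1, h2⟩, ?_⟩
          exact ⟨x.take i, ⟨hInDf, by simp [hxlen]; omega, hfS⟩,
            x.drop i, ⟨hInD, by simp [hxlen], hdropS⟩, (List.take_append_drop i x).symm⟩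
        · have hcomb : (x.take i).drop j ++ x.drop i = x.drop j :=
            drop_take_append (le_of_lt hji) (by rw [hxlen]; omega)
          have hInD2 : InD X (x.drop j) := by
            rw [← hcomb]; exact InD.step hInDf hfS hInD hdropS
          exact ih j hji hj1 (by omega) hInD2
    apply theta (n - 1) (by omega) (by omega)
    have hlen1 : (x.drop (n - 1)).length = 1 := by simp [hxlen]; omega
    obtain ⟨c, hc⟩ := List.length_eq_one_iff.mp hlen1
    rw [hc]; exact InD.base c
  refine ⟨Lset X, Rset X, ⟨?_, ?_, ?_, ?_, ?_⟩, ?_⟩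
  · -- L 1 ∪ R 1 = one-letter words
    ext u
    simp only [Set.mem_union, Set.mem_setOf_eq, Lset, Rset]
    constructor
    · rintro (⟨_, h, _⟩ | ⟨_, h, _⟩) <;> exact h
    · intro h
      obtain ⟨c, rfl⟩ := List.length_eq_one_iff.mp h
      by_cases hS : [c] ∈ Suf X
      · exact Or.inr ⟨InD.base c, h, hS⟩
      · exact Or.inl ⟨InD.base c, h, hS⟩
  · ext u
    simp only [Set.mem_inter_iff, Lset, Rset, Set.mem_setOf_eq, Set.mem_empty_iff_false,
      iff_false, not_and]
    tauto
  · -- L 1 nonempty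
    obtain ⟨c, t, hct⟩ := List.exists_cons_of_ne_nil (show x₀ ≠ [] by
      intro h
      have h3 := hlen x₀ hx₀; rw [h] at h3; simp at h3; omega)
    refine ⟨[c], InD.base c, rfl, ?_⟩
    intro hS
    apply hPS [c] ?_ hS
    refine ⟨by simp, x₀, hx₀, ⟨t, by rw [hct]; rfl⟩, ?_⟩
    intro h'
    have h3 := congrArg List.length h'
    rw [hlen x₀ hx₀] at h3; simp at h3; omega
  · -- R 1 nonempty
    have hlen1 : (x₀.drop (n - 1)).length = 1 := by
      rw [List.length_drop, hlen x₀ hx₀]; omega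
    obtain ⟨c, hc⟩ := List.length_eq_one_iff.mp hlen1
    refine ⟨[c], InD.base c, rfl, ?_⟩
    refine ⟨by simp, x₀, hx₀, hc ▸ List.drop_suffix (n - 1) x₀, ?_⟩
    intro h'
    have h3 := congrArg List.length h'
    rw [hlen x₀ hx₀] at h3; simp at h3; omega
  · -- recursion conditions
    intro i h2i hin
    constructor
    · ext u
      constructor
      · intro hu
        have hu2 : InD X u ∧ u.length = i := by
          rcases hu with ⟨ha1, ha2, _⟩ | ⟨ha1, ha2, _⟩ <;> exact ⟨ha1, ha2⟩
        obtain ⟨hInD, hulen⟩ := hu2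
        cases hInD with
        | base c => simp at hulen; omega
        | @step l r hl hlS hr hrS =>
          simp only [Set.mem_iUnion]
          have hll : 0 < l.length := hl.length_pos
          have hrl : 0 < r.length := hr.length_pos
          have hlen2 : l.length + r.length = i := by simpa using hulen
          exact ⟨l.length, Finset.mem_Ico.mpr ⟨by omega, by omega⟩,
            l, ⟨hl, rfl, hlS⟩, r, ⟨hr, by omega, hrS⟩, rfl⟩
      · intro hu
        simp only [Set.mem_iUnion] at hu
        obtain ⟨j, hj, a, ⟨haD, haLen, haS⟩, b, ⟨hbD, hbLen, hbS⟩, rfl⟩ := hu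
        rw [Finset.mem_Ico] at hj
        have hab : (a ++ b).length = i := by
          simp [haLen, hbLen]; omega
        have hInD : InD X (a ++ b) := InD.step haD haS hbD hbS
        by_cases hS : a ++ b ∈ Suf X
        · exact Or.inr ⟨hInD, hab, hS⟩
        · exact Or.inl ⟨hInD, hab, hS⟩
    · ext u
      simp only [Set.mem_inter_iff, Lset, Rset, Set.mem_setOf_eq, Set.mem_empty_iff_false,
        iff_false, not_and]
      tauto
  · -- the main equality
    ext w
    constructor
    · intro hw; exact lemC w hw
    · intro hw
      simp only [Set.mem_iUnion] at hw
      obtain ⟨i, hi, a, ha, b, hb, rfl⟩ := hw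
      exact lemB i a b ha hb
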